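/- Let A be a d × d matrix over a field k of characteristic p, and let A^{(p^i)} denote the matrix obtained by raising all entries to the p^i-th power. Then the rank of the product A · A^{(p)} · A^{(p²)} ⋯ A^{(p^{d-1})} (the stable rank of A) equals the dimension of the semisimple part V_ss of the p-semilinear map φ : k^d → k^d, φ(x) = A · x^{(p)}, where x^{(p)} raises coordinates to the p-th power, provided k is perfect. -/
import Mathlib

/-- Let `A` be a `d × d` matrix over a perfect field `k` of characteristic `p`, and let
`A^{(p^i)}` denote the entrywise `p^i`-th power.  For the `p`-semilinear map
`φ(x) = A · x^{(p)}` on `k^d` with Fitting decomposition `k^d = V_ss ⊕ V_nil` (with `φ`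
bijective on `V_ss` and nilpotent on `V_nil`), the rank of the product
`A · A^{(p)} · ⋯ · A^{(p^{d-1})}` (the stable rank of `A`) equals `dim_k V_ss`. -/
theorem stmt8 (k : Type*) [Field k] (p : ℕ) [Fact p.Prime] [CharP k p] [PerfectRing k p]
    (d : ℕ) (A : Matrix (Fin d) (Fin d) k)
    (φ : (Fin d → k) → (Fin d → k))
    (hφ : φ = fun x => A.mulVec (fun i => (x i) ^ p))
    (Vss Vnil : Submodule k (Fin d → k)) (hcompl : IsCompl Vss Vnil)
    (hbij : Set.BijOn φ (Vss : Set (Fin d → k)) (Vss : Set (Fin d → k)))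
    (hmaps : ∀ x ∈ Vnil, φ x ∈ Vnil)
    (hnil : ∃ N : ℕ, ∀ x ∈ Vnil, φ^[N] x = 0) :
    ((List.range d).map (fun i => A.map (fun a => a ^ (p ^ i)))).prod.rank
      = Module.finrank k Vss := by
  classical
  obtain ⟨N, hN⟩ := hnil
  set B : ℕ → Matrix (Fin d) (Fin d) k :=
    fun m => ((List.range m).map (fun i => A.map (fun a => a ^ (p ^ i)))).prod with hBdef
  have hBsucc : ∀ m, B (m + 1) = B m * A.map (fun a => a ^ (p ^ m)) := by
    intro m
    simp [hBdef, List.range_succ]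
  -- iterate formula
  have hiter : ∀ m x, φ^[m] x = (B m).mulVec (fun i => x i ^ p ^ m) := by
    intro m
    induction m with
    | zero => intro x; simp [hBdef]
    | succ m ih =>
      intro x
      have hA : A.map ⇑(iterateFrobenius k p m) = A.map (fun a => a ^ p ^ m) := by
        ext a b; simp [Matrix.map_apply, iterateFrobenius_def]
      have hv : ⇑(iterateFrobenius k p m) ∘ (fun j => x j ^ p)
          = fun i => x i ^ p ^ (m + 1) := by
        funext j
        simp only [Function.comp_apply, iterateFrobenius_def, ← pow_mul]
        rw [← pow_succ']
      have hkey : (fun i => φ x i ^ p ^ m)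
          = (A.map fun a => a ^ p ^ m).mulVec (fun i => x i ^ p ^ (m + 1)) := by
        funext i
        have h2 : φ x i ^ p ^ m = iterateFrobenius k p m (φ x i) := rfl
        rw [h2]
        simp only [hφ]
        rw [RingHom.map_mulVec (iterateFrobenius k p m) A (fun j => x j ^ p) i, hA, hv]
      rw [Function.iterate_succ_apply, ih, hkey, Matrix.mulVec_mulVec, ← hBsucc]
  set S : ℕ → Submodule k (Fin d → k) := fun m => LinearMap.range (B m).mulVecLin with hSdef
  have hfrob : ∀ (m : ℕ) (w : Fin d → k), ∃ u : Fin d → k, (fun i => u i ^ p ^ m) = w := by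
    intro m w
    refine ⟨fun i => (iterateFrobeniusEquiv k p m).symm (w i), funext fun i => ?_⟩
    have := (iterateFrobeniusEquiv k p m).apply_symm_apply (w i)
    rwa [iterateFrobeniusEquiv_def] at this
  have hrangeSet : ∀ m, Set.range (φ^[m]) = (S m : Set (Fin d → k)) := by
    intro m
    ext y
    constructor
    · rintro ⟨x, rfl⟩
      exact ⟨fun i => x i ^ p ^ m, (hiter m x).symm⟩
    · rintro ⟨v, rfl⟩
      obtain ⟨u, hu⟩ := hfrob m v
      exact ⟨u, by rw [hiter m u, hu, Matrix.mulVecLin_apply]⟩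
  have hrange : ∀ m y, y ∈ S m ↔ ∃ x, φ^[m] x = y := by
    intro m y
    rw [← SetLike.mem_coe, ← hrangeSet m]
    exact Iff.rfl
  have hanti : ∀ m, S (m + 1) ≤ S m := by
    intro m
    rw [hSdef]
    simp only [hBsucc, Matrix.mulVecLin_mul]
    exact LinearMap.range_comp_le_range _ _
  have hanti' : ∀ a b, a ≤ b → S b ≤ S a := by
    intro a b hab
    induction b, hab using Nat.le_induction with
    | base => exact le_rfl
    | succ n hn ih => exact le_trans (hanti n) ih
  have hVssS : ∀ m, Vss ≤ S m := by
    intro m v hv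
    obtain ⟨x, _, hx⟩ := (hbij.iterate m).surjOn hv
    exact (hrange m v).mpr ⟨x, hx⟩
  have hSN : ∀ m, N ≤ m → S m ≤ Vss := by
    intro m hm y hy
    obtain ⟨x, rfl⟩ := (hrange N y).mp (hanti' N m hm hy)
    have hx : x ∈ Vss ⊔ Vnil := by rw [hcompl.sup_eq_top]; trivial
    obtain ⟨v, hv, w, hw, rfl⟩ := Submodule.mem_sup.mp hx
    have hsplit : φ^[N] (v + w) = φ^[N] v + φ^[N] w := by
      have harg : (fun i => (v + w) i ^ p ^ N)
          = ((fun i => v i ^ p ^ N) + fun i => w i ^ p ^ N) := by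
        funext i
        simp only [Pi.add_apply]
        exact add_pow_char_pow (v i) (w i) p N
      rw [hiter, hiter, hiter, harg, Matrix.mulVec_add]
    rw [hsplit, hN w hw, add_zero]
    exact (hbij.mapsTo.iterate N) hv
  have hstep : ∀ m, Set.range (φ^[m + 1]) = φ '' Set.range (φ^[m]) := by
    intro m
    rw [Function.iterate_succ', Set.range_comp]
  have hstab : ∀ m, S m = S (m + 1) → ∀ j, S (m + j) = S m := by
    intro m hm j
    induction j with
    | zero => rfl
    | succ j ih =>
      apply SetLike.coe_injective
      show (S (m + j + 1) : Set (Fin d → k)) = S m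
      rw [← hrangeSet (m + j + 1), hstep (m + j), hrangeSet (m + j), ih, ← hrangeSet m,
        ← hstep m, hrangeSet (m + 1), ← hm, hrangeSet m]
  have hfind : ∃ m ≤ d, S m = S (m + 1) := by
    by_contra hc
    push_neg at hc
    have hlt : ∀ m ≤ d, S (m + 1) < S m := fun m hm =>
      lt_of_le_of_ne (hanti m) (fun h => hc m hm h.symm)
    have hdim : ∀ j ≤ d + 1, Module.finrank k (S j) + j ≤ d := by
      intro j hj
      induction j with
      | zero =>
        have h0 := Submodule.finrank_le (S 0)
        simpa [Module.finrank_pi] using h0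
      | succ j ih =>
        have h1 : Module.finrank k (S (j + 1)) < Module.finrank k (S j) :=
          Submodule.finrank_lt_finrank_of_lt (hlt j (by omega))
        have h2 := ih (by omega)
        omega
    have := hdim (d + 1) le_rfl
    omega
  obtain ⟨m, hmd, hm⟩ := hfind
  have hSm : S m = Vss := by
    apply le_antisymm
    · calc S m = S (m + N) := (hstab m hm N).symm
        _ ≤ Vss := hSN (m + N) (by omega)
    · exact hVssS m
  have hSd : S d = Vss := by
    have h := hstab m hm (d - m)
    rw [Nat.add_sub_cancel' hmd] at h
    rw [h, hSm]
  have hfinal : ((List.range d).map (fun i => A.map (fun a => a ^ (p ^ i)))).prod.rank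
      = Module.finrank k (S d) := rfl
  rw [hfinal, hSd]
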